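/- Let A and B be lextensive categories and I a set. Then: (1) the coproduct functor ∐ : Aᴵ → A is a parametric right adjoint; (2) if Fᵢ : A → B for i ∈ I are parametric right adjoints, then the pointwise coproduct ∐ᵢFᵢ : A → B is a parametric right adjoint; (3) if φᵢ : Fᵢ → Gᵢ are cartesian natural transformations, then ∐ᵢφᵢ : ∐ᵢFᵢ → ∐ᵢGᵢ is cartesian. -/

import Mathlib

set_option linter.unusedSectionVars false

open CategoryTheory CategoryTheory.Limits

universe w v' v u' u

namespace Paper

/-- A functor `T : A ⥤ B` (with `A` having a terminal object) is a parametric right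
adjoint when the induced functor `A ≌ A/1 ⥤ B/T1` on slices has a left adjoint. -/
def IsPRA {A : Type u} {B : Type u'} [Category.{v} A] [Category.{v'} B] [HasTerminal A]
    (T : A ⥤ B) : Prop :=
  (Over.post (X := ⊤_ A) T).IsRightAdjoint

noncomputable instance piHasTerminal {I : Type w} {A : I → Type u}
    [∀ i, Category.{v} (A i)] [∀ i, HasTerminal (A i)] : HasTerminal (∀ i, A i) :=
  IsTerminal.hasTerminal (X := fun i => ⊤_ (A i))
    (IsTerminal.ofUniqueHom (fun Y => fun i => terminal.from (Y i))
      (fun _ m => funext fun i => terminal.hom_ext (m i) _))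


section
variable {A : Type u} [Category.{v} A] [HasCoproducts.{w} A]

/-- The canonical comparison functor `∏ᵢ A/Xᵢ ⥤ A/(∐ᵢXᵢ)` sending a family of maps to
their coproduct. -/
noncomputable def sliceComparison {I : Type w} (X : I → A) :
    (∀ i, Over (X i)) ⥤ Over (∐ X) where
  obj f := Over.mk (Sigma.desc (fun i => (f i).hom ≫ Sigma.ι X i))
  map {f g} h := Over.homMk (Limits.Sigma.map (fun i => (h i).left)) (by
    apply Limits.Sigma.hom_ext
    intro i
    simp)

/-- A category is lextensive when (in addition to finite limits and coproducts) the
comparison functors `∏ᵢ A/Xᵢ ⥤ A/(∐ᵢXᵢ)` are equivalences. -/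
def Lextensive (A : Type u) [Category.{v} A] [HasFiniteLimits A] [HasCoproducts.{w} A] :
    Prop :=
  ∀ {I : Type w} (X : I → A), (sliceComparison X).IsEquivalence

/-- The coproduct functor `Aᴵ ⥤ A`. -/
noncomputable def sigmaFunctor (I : Type w) (A : Type u) [Category.{v} A]
    [HasCoproducts.{w} A] : (∀ _ : I, A) ⥤ A where
  obj X := ∐ X
  map f := Limits.Sigma.map f
  map_id X := Limits.Sigma.map_id
  map_comp f g := (Limits.Sigma.map_comp_map f g).symm

/-- The pointwise coproduct of a family of functors. -/
noncomputable def ptwiseCoprod {I : Type w} {B : Type u'} [Category.{v'} B]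
    [HasCoproducts.{w} B] (F : I → (A ⥤ B)) : A ⥤ B :=
  Functor.pi' (fun i => F i) ⋙ sigmaFunctor I B

/-- A natural transformation is cartesian when all naturality squares are pullbacks. -/
def IsCartesianNT {C : Type u'} [Category.{v'} C] {F G : C ⥤ A} (α : F ⟶ G) : Prop :=
  ∀ {X Y : C} (f : X ⟶ Y), IsPullback (α.app X) (F.map f) (G.map f) (α.app Y)

/-- The coproduct of a family of natural transformations. -/
noncomputable def sigmaNat {I : Type w} {B : Type u'} [Category.{v'} B]
    [HasCoproducts.{w} B] {F G : I → (A ⥤ B)} (φ : ∀ i, F i ⟶ G i) :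
    ptwiseCoprod F ⟶ ptwiseCoprod G where
  app X := Limits.Sigma.map (fun i => (φ i).app X)
  naturality {X Y} f := by
    show Limits.Sigma.map (fun i => (F i).map f) ≫ Limits.Sigma.map (fun i => (φ i).app Y)
        = Limits.Sigma.map (fun i => (φ i).app X) ≫ Limits.Sigma.map (fun i => (G i).map f)
    rw [Limits.Sigma.map_comp_map, Limits.Sigma.map_comp_map]
    congr 1
    funext i
    exact ((φ i).naturality f)

end

end Paper

open Paper

namespace PRAAux

universe w₁ u₁ v₁ u₂ v₂

section PiAdj

variable {I : Type w} {C : Type u₁} [Category.{v₁} C] [HasCoproducts.{w} C]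
  {D : I → Type u₂} [∀ i, Category.{v₂} (D i)]

/-- The pointwise-coproduct left adjoint to `Functor.pi'` of right adjoints. -/
noncomputable def piLeftAdjoint (L : ∀ i, D i ⥤ C) : (∀ i, D i) ⥤ C where
  obj d := ∐ (fun i => (L i).obj (d i))
  map f := Limits.Sigma.map (fun i => (L i).map (f i))
  map_id d := by
    show Limits.Sigma.map (fun i => (L i).map (𝟙 (d i))) = 𝟙 _
    have : (fun i => (L i).map (𝟙 (d i))) = fun i => 𝟙 ((L i).obj (d i)) := by
      funext i; simp
    rw [this, Limits.Sigma.map_id]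
  map_comp {d d' d''} f g := by
    show Limits.Sigma.map (fun i => (L i).map (f i ≫ g i))
        = Limits.Sigma.map (fun i => (L i).map (f i)) ≫ Limits.Sigma.map (fun i => (L i).map (g i))
    rw [Limits.Sigma.map_comp_map]
    simp

noncomputable def piAdjunction {L : ∀ i, D i ⥤ C} {G : ∀ i, C ⥤ D i}
    (adj : ∀ i, L i ⊣ G i) : piLeftAdjoint L ⊣ Functor.pi' G :=
  Adjunction.mkOfHomEquiv
    { homEquiv := fun d c =>
        { toFun := fun g i => (adj i).homEquiv _ _ (Sigma.ι (fun j => (L j).obj (d j)) i ≫ g)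
          invFun := fun h => Sigma.desc fun i => ((adj i).homEquiv _ _).symm (h i)
          left_inv := fun g => by
            apply Sigma.hom_ext
            intro i
            simp
          right_inv := fun h => by
            funext i
            exact (congrArg ((adj i).homEquiv _ _) (Sigma.ι_desc (f := fun j => (L j).obj (d j)) _ i)).trans (((adj i).homEquiv _ _).apply_symm_apply (h i)) }
      homEquiv_naturality_left_symm := fun {d d' c} f g => by
        apply Sigma.hom_ext
        intro i
        show _ = Sigma.ι _ i ≫ (piLeftAdjoint L).map f ≫ _
        show Sigma.ι _ i ≫ Sigma.desc (fun j => ((adj j).homEquiv _ _).symm (f j ≫ g j)) = Sigma.ι _ i ≫ Limits.Sigma.map (fun j => (L j).map (f j)) ≫ Sigma.desc (fun j => ((adj j).homEquiv _ _).symm (g j))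
        simp [piLeftAdjoint, Adjunction.homEquiv_naturality_left_symm]
        exact (adj i).homEquiv_naturality_left_symm (f i) (g i)
      homEquiv_naturality_right := fun {d c c'} f g => by
        funext i
        show ((adj i).homEquiv _ _) (_ ≫ f ≫ g) = _
        erw [← Category.assoc, (adj i).homEquiv_naturality_right]
        rfl }

lemma pi'_isRightAdjoint (G : ∀ i, C ⥤ D i) [∀ i, (G i).IsRightAdjoint] :
    (Functor.pi' G).IsRightAdjoint :=
  (piAdjunction (fun i => Adjunction.ofIsRightAdjoint (G i))).isRightAdjoint

end PiAdj

section OverPi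

variable {I : Type w} {A : Type u} [Category.{v} A] [HasCoproducts.{w} A]

/-- Slicing a product category over an object is the same as the product of the slices. -/
@[simps]
noncomputable def overPiFunctor (X : I → A) :
    Over (X : ∀ _ : I, A) ⥤ ∀ i, Over (X i) where
  obj f i := Over.mk (f.hom i)
  map {f g} h i := Over.homMk (h.left i) (congrFun (Over.w h) i)

@[simps]
noncomputable def overPiInverse (X : I → A) :
    (∀ i, Over (X i)) ⥤ Over (X : ∀ _ : I, A) where
  obj g := Over.mk (Y := fun i => (g i).left) (fun i => (g i).hom)
  map {g g'} h := Over.homMk (fun i => (h i).left) (funext fun i => Over.w (h i))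

noncomputable def overPi (X : I → A) :
    Over (X : ∀ _ : I, A) ≌ ∀ i, Over (X i) where
  functor := overPiFunctor X
  inverse := overPiInverse X
  unitIso := NatIso.ofComponents
    (fun f => Over.isoMk (Iso.refl _) (by exact Category.id_comp _)) (by intro _ _ f; apply Over.OverMorphism.ext; exact (Category.comp_id _).trans (Category.id_comp _).symm)
  counitIso := NatIso.ofComponents
    (fun g =>
      { hom := fun i => Over.homMk (𝟙 _) (by exact Category.id_comp _)
        inv := fun i => Over.homMk (𝟙 _) (by exact Category.id_comp _)
        hom_inv_id := by funext i; apply Over.OverMorphism.ext; exact Category.comp_id _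
        inv_hom_id := by funext i; apply Over.OverMorphism.ext; exact Category.comp_id _ })
    (by intro g g' h; funext i; apply Over.OverMorphism.ext; exact (Category.comp_id _).trans (Category.id_comp _).symm)
  functor_unitIso_comp := by intro f; funext i; apply Over.OverMorphism.ext; exact Category.comp_id _

end OverPi

section Comparison

variable {I : Type w} {A : Type u} [Category.{v} A] [HasFiniteLimits A] [HasCoproducts.{w} A]

/-- `Over.post` of the coproduct functor is the comparison functor, up to the slice
equivalence for products. -/
noncomputable def postSigmaIso (X : I → A) :
    Over.post (X := X) (sigmaFunctor I A) ≅ overPiFunctor X ⋙ sliceComparison X :=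
  NatIso.ofComponents
    (fun f => Over.isoMk (Iso.refl _) (by
      dsimp [sliceComparison, Paper.sigmaFunctor]
      show 𝟙 _ ≫ Sigma.desc (fun i => f.hom i ≫ Sigma.ι X i) = Limits.Sigma.map f.hom
      apply Sigma.hom_ext
      intro i
      simp))
    (fun {f g} h => by
      apply Over.OverMorphism.ext
      dsimp [sliceComparison, Paper.sigmaFunctor]
      show Limits.Sigma.map h.left ≫ 𝟙 _ = 𝟙 _ ≫ Limits.Sigma.map (fun i => h.left i)
      apply Sigma.hom_ext
      intro i
      simp)

lemma post_sigma_isEquivalence (hA : Lextensive A) (X : I → A) :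
    (Over.post (X := X) (sigmaFunctor I A)).IsEquivalence := by
  haveI : (sliceComparison X).IsEquivalence := hA X
  haveI : (overPiFunctor X).IsEquivalence := (overPi X).isEquivalence_functor
  have hc : (overPiFunctor X ⋙ sliceComparison X).IsEquivalence := Functor.isEquivalence_trans _ _
  exact @Functor.isEquivalence_of_iso _ _ _ _ _ _ (postSigmaIso X).symm hc

variable {B : Type u'} [Category.{v'} B] [HasCoproducts.{w} B]

/-- `Over.post` of a pointwise coproduct factors through the comparison functor. -/
noncomputable def postPtwiseIso [HasTerminal A] (F : I → (A ⥤ B)) :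
    Over.post (X := ⊤_ A) (ptwiseCoprod F) ≅
      Functor.pi' (fun i => Over.post (X := ⊤_ A) (F i)) ⋙
        sliceComparison (fun i => (F i).obj (⊤_ A)) :=
  NatIso.ofComponents
    (fun f => Over.isoMk (Iso.refl _) (by
      dsimp [sliceComparison, Paper.sigmaFunctor, ptwiseCoprod, Functor.pi']
      show 𝟙 _ ≫ Sigma.desc (fun i => (F i).map f.hom ≫ Sigma.ι (fun i => (F i).obj (⊤_ A)) i) = Limits.Sigma.map (fun i => (F i).map f.hom)
      apply Sigma.hom_ext
      intro i
      simp))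
    (fun {f g} h => by
      apply Over.OverMorphism.ext
      dsimp [sliceComparison, Paper.sigmaFunctor, ptwiseCoprod, Functor.pi']
      show Limits.Sigma.map (fun i => (F i).map h.left) ≫ 𝟙 _ = 𝟙 _ ≫ Limits.Sigma.map (fun i => (F i).map h.left)
      apply Sigma.hom_ext
      intro i
      simp)

end Comparison

section Pullback

variable {I : Type w} {B : Type u'} [Category.{v'} B] [HasCoproducts.{w} B]

lemma sigma_map_eq_desc {U Z : I → B} (u : ∀ i, U i ⟶ Z i) :
    Limits.Sigma.map u = Sigma.desc (fun i => u i ≫ Sigma.ι Z i) := by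
  apply Sigma.hom_ext
  intro i
  simp

variable [HasFiniteLimits B]

/-- In a lextensive category, a coproduct of pullback squares is a pullback square. -/
lemma isPullback_sigma (hB : Lextensive B) {W U V Z : I → B}
    (p : ∀ i, W i ⟶ U i) (q : ∀ i, W i ⟶ V i) (u : ∀ i, U i ⟶ Z i) (v : ∀ i, V i ⟶ Z i)
    (h : ∀ i, IsPullback (p i) (q i) (u i) (v i)) :
    IsPullback (Limits.Sigma.map p) (Limits.Sigma.map q)
      (Limits.Sigma.map u) (Limits.Sigma.map v) := by
  have comm : Limits.Sigma.map p ≫ Limits.Sigma.map u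
      = Limits.Sigma.map q ≫ Limits.Sigma.map v := by
    rw [Limits.Sigma.map_comp_map, Limits.Sigma.map_comp_map]
    congr 1
    funext i
    exact (h i).w
  set F := sliceComparison (A := B) Z with hF
  haveI : F.IsEquivalence := hB Z
  have key : ∀ (T : B) (a : T ⟶ ∐ U) (b : T ⟶ ∐ V),
      a ≫ Limits.Sigma.map u = b ≫ Limits.Sigma.map v →
      ∃! l : T ⟶ ∐ W, l ≫ Limits.Sigma.map p = a ∧ l ≫ Limits.Sigma.map q = b := by
    intro T a b hab
    set t : T ⟶ ∐ Z := a ≫ Limits.Sigma.map u with ht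
    set T' : ∀ i, Over (Z i) := F.objPreimage (Over.mk t) with hT'
    set η : F.obj T' ≅ Over.mk t := F.objObjPreimageIso (Over.mk t) with hη
    have wη : η.hom.left ≫ t = (F.obj T').hom := by simpa using Over.w η.hom
    have wη' : η.inv.left ≫ η.hom.left = 𝟙 T := by
      rw [← Over.comp_left, η.inv_hom_id]
      rfl
    have homT' : (F.obj T').hom = Sigma.desc (fun i => (T' i).hom ≫ Sigma.ι Z i) := rfl
    let φU : F.obj T' ⟶ F.obj (fun i => Over.mk (u i)) :=
      Over.homMk (η.hom.left ≫ a) (by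
        show (η.hom.left ≫ a) ≫ Sigma.desc (fun i => (Over.mk (u i)).hom ≫ Sigma.ι Z i)
            = (F.obj T').hom
        have : Sigma.desc (fun i => (Over.mk (u i)).hom ≫ Sigma.ι Z i)
            = Limits.Sigma.map u := (sigma_map_eq_desc u).symm
        erw [this, Category.assoc, ← ht]
        exact wη)
    let φV : F.obj T' ⟶ F.obj (fun i => Over.mk (v i)) :=
      Over.homMk (η.hom.left ≫ b) (by
        show (η.hom.left ≫ b) ≫ Sigma.desc (fun i => (Over.mk (v i)).hom ≫ Sigma.ι Z i)
            = (F.obj T').hom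
        have : Sigma.desc (fun i => (Over.mk (v i)).hom ≫ Sigma.ι Z i)
            = Limits.Sigma.map v := (sigma_map_eq_desc v).symm
        erw [this, Category.assoc, ← hab]
        exact wη)
    set fU : T' ⟶ (fun i => Over.mk (u i)) := F.preimage φU with hfUdef
    set fV : T' ⟶ (fun i => Over.mk (v i)) := F.preimage φV with hfVdef
    have hfU : Limits.Sigma.map (fun i => (fU i).left) = η.hom.left ≫ a :=
      congrArg CommaMorphism.left (F.map_preimage φU)
    have hfV : Limits.Sigma.map (fun i => (fV i).left) = η.hom.left ≫ b :=
      congrArg CommaMorphism.left (F.map_preimage φV)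
    have wUV : ∀ i, (fU i).left ≫ u i = (fV i).left ≫ v i := fun i => by
      have h1 : (fU i).left ≫ u i = (T' i).hom := by simpa using Over.w (fU i)
      have h2 : (fV i).left ≫ v i = (T' i).hom := by simpa using Over.w (fV i)
      rw [h1, h2]
    let l : ∀ i, (T' i).left ⟶ W i := fun i => (h i).lift _ _ (wUV i)
    have hlp : (fun i => l i ≫ p i) = fun i => (fU i).left := by
      funext i; exact (h i).lift_fst _ _ _
    have hlq : (fun i => l i ≫ q i) = fun i => (fV i).left := by
      funext i; exact (h i).lift_snd _ _ _
    refine ⟨η.inv.left ≫ Limits.Sigma.map l, ⟨?_, ?_⟩, ?_⟩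
    · erw [Category.assoc, Limits.Sigma.map_comp_map, hlp, hfU, ← Category.assoc, wη',
        Category.id_comp]
    · erw [Category.assoc, Limits.Sigma.map_comp_map, hlq, hfV, ← Category.assoc, wη',
        Category.id_comp]
    · rintro m ⟨hm1, hm2⟩
      let ψ : F.obj T' ⟶ F.obj (fun i => Over.mk (p i ≫ u i)) :=
        Over.homMk (η.hom.left ≫ m) (by
          show (η.hom.left ≫ m) ≫ Sigma.desc (fun i => (Over.mk (p i ≫ u i)).hom ≫ Sigma.ι Z i)
              = (F.obj T').hom
          have e1 : Sigma.desc (fun i => (Over.mk (p i ≫ u i)).hom ≫ Sigma.ι Z i)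
              = Limits.Sigma.map (fun i => p i ≫ u i) :=
            (sigma_map_eq_desc (fun i => p i ≫ u i)).symm
          have e2 : Limits.Sigma.map (fun i => p i ≫ u i)
              = Limits.Sigma.map p ≫ Limits.Sigma.map u :=
            (Limits.Sigma.map_comp_map _ _).symm
          erw [e1, e2]
          rw [show (η.hom.left ≫ m) ≫ Limits.Sigma.map p ≫ Limits.Sigma.map u
              = η.hom.left ≫ t from
            calc (η.hom.left ≫ m) ≫ Limits.Sigma.map p ≫ Limits.Sigma.map u
                = η.hom.left ≫ (m ≫ Limits.Sigma.map p) ≫ Limits.Sigma.map u := by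
                  simp only [Category.assoc]
              _ = η.hom.left ≫ a ≫ Limits.Sigma.map u := by rw [hm1]
              _ = η.hom.left ≫ t := rfl]
          exact wη)
      set m' : T' ⟶ (fun i => Over.mk (p i ≫ u i)) := F.preimage ψ with hm'def
      have hm' : Limits.Sigma.map (fun i => (m' i).left) = η.hom.left ≫ m :=
        congrArg CommaMorphism.left (F.map_preimage ψ)
      let πP : (fun i => Over.mk (p i ≫ u i)) ⟶ (fun i => Over.mk (u i) : ∀ i, Over (Z i)) :=
        fun i => Over.homMk (p i) rfl
      let πQ : (fun i => Over.mk (p i ≫ u i)) ⟶ (fun i => Over.mk (v i) : ∀ i, Over (Z i)) :=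
        fun i => Over.homMk (q i) ((h i).w.symm)
      have hcompU : ∀ i, (m' i).left ≫ p i = (fU i).left := by
        have : (fun i => m' i ≫ πP i) = fU := by
          apply F.map_injective
          rw [F.map_preimage]
          apply Over.OverMorphism.ext
          show Limits.Sigma.map (fun i => (m' i ≫ πP i).left) = η.hom.left ≫ a
          have : (fun i => (m' i ≫ πP i).left) = fun i => (m' i).left ≫ p i := by
            funext i; rfl
          erw [this, ← Limits.Sigma.map_comp_map, hm', Category.assoc, hm1]
          rfl
        intro i
        have := congrArg CommaMorphism.left (congrFun this i)
        exact this
      have hcompV : ∀ i, (m' i).left ≫ q i = (fV i).left := by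
        have : (fun i => m' i ≫ πQ i) = fV := by
          apply F.map_injective
          rw [F.map_preimage]
          apply Over.OverMorphism.ext
          show Limits.Sigma.map (fun i => (m' i ≫ πQ i).left) = η.hom.left ≫ b
          have : (fun i => (m' i ≫ πQ i).left) = fun i => (m' i).left ≫ q i := by
            funext i; rfl
          erw [this, ← Limits.Sigma.map_comp_map, hm', Category.assoc, hm2]
          rfl
        intro i
        have := congrArg CommaMorphism.left (congrFun this i)
        exact this
      have hml : (fun i => (m' i).left) = l := by
        funext i
        refine (h i).hom_ext ?_ ?_
        · rw [hcompU i, (h i).lift_fst]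
        · rw [hcompV i, (h i).lift_snd]
      calc m = (η.inv.left ≫ η.hom.left) ≫ m := by rw [wη']; simp
        _ = η.inv.left ≫ Limits.Sigma.map (fun i => (m' i).left) := by
            rw [Category.assoc, hm']
        _ = η.inv.left ≫ Limits.Sigma.map l := by rw [hml]
  refine IsPullback.of_isLimit (c := PullbackCone.mk _ _ comm) ?_
  exact PullbackCone.IsLimit.mk comm
    (fun s => (key s.pt s.fst s.snd s.condition).exists.choose)
    (fun s => (key s.pt s.fst s.snd s.condition).exists.choose_spec.1)
    (fun s => (key s.pt s.fst s.snd s.condition).exists.choose_spec.2)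
    (fun s m hm1 hm2 => (key s.pt s.fst s.snd s.condition).unique ⟨hm1, hm2⟩
      (key s.pt s.fst s.snd s.condition).exists.choose_spec)

end Pullback

end PRAAux

/-- Let `A` and `B` be lextensive categories and `I` a set.  Then:
(1) the coproduct functor `∐ : Aᴵ ⥤ A` is a parametric right adjoint;
(2) if `Fᵢ : A ⥤ B` are parametric right adjoints then the pointwise coproduct
`∐ᵢFᵢ : A ⥤ B` is a parametric right adjoint; and
(3) if `φᵢ : Fᵢ ⟶ Gᵢ` are cartesian natural transformations then
`∐ᵢφᵢ : ∐ᵢFᵢ ⟶ ∐ᵢGᵢ` is cartesian. -/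
theorem lextensive_coproducts_pra
    (I : Type w) (A : Type u) (B : Type u')
    [Category.{v} A] [Category.{v'} B]
    [HasFiniteLimits A] [HasCoproducts.{w} A] [HasFiniteLimits B] [HasCoproducts.{w} B]
    (hA : Paper.Lextensive A) (hB : Paper.Lextensive B) :
    Paper.IsPRA (Paper.sigmaFunctor I A) ∧
    (∀ F : I → (A ⥤ B), (∀ i, Paper.IsPRA (F i)) → Paper.IsPRA (Paper.ptwiseCoprod F)) ∧
    (∀ (F G : I → (A ⥤ B)) (φ : ∀ i, F i ⟶ G i),
      (∀ i, Paper.IsCartesianNT (φ i)) → Paper.IsCartesianNT (Paper.sigmaNat φ)) := by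
  refine ⟨?_, ?_, ?_⟩
  · show (Over.post (X := ⊤_ (∀ _ : I, A)) (sigmaFunctor I A)).IsRightAdjoint
    haveI := PRAAux.post_sigma_isEquivalence hA (⊤_ (∀ _ : I, A))
    infer_instance
  · intro F hF
    show (Over.post (X := ⊤_ A) (ptwiseCoprod F)).IsRightAdjoint
    haveI : ∀ i, (Over.post (X := ⊤_ A) (F i)).IsRightAdjoint := hF
    haveI : HasCoproducts.{w} (Over (⊤_ A)) := fun J => inferInstance
    haveI : (Functor.pi' (fun i => Over.post (X := ⊤_ A) (F i))).IsRightAdjoint :=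
      PRAAux.pi'_isRightAdjoint _
    haveI : (sliceComparison (fun i => (F i).obj (⊤_ A))).IsEquivalence := hB _
    have hc := Functor.isRightAdjoint_comp (F := (Functor.pi' (fun i => Over.post (X := ⊤_ A) (F i)))) (G := (sliceComparison (fun i => (F i).obj (⊤_ A))))
    exact @Functor.isRightAdjoint_of_iso _ _ _ _ _ _ (PRAAux.postPtwiseIso F).symm hc
  · intro F G φ hφ
    exact fun {X Y} f => PRAAux.isPullback_sigma hB (fun i => (φ i).app X)
      (fun i => (F i).map f) (fun i => (G i).map f) (fun i => (φ i).app Y)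
      (fun i => hφ i f)
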